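/- Let X be a simple random variable (finitely many values, all with rational probabilities) with Q_2(X) = m/n ∈ (1/(k+1), 1/k]. Then the law of X can be written as a convex combination (1-τ)·(average of K probability measures, each uniform on k+1 points pairwise at distance ≥ 2) + τ·(average of L probability measures, each uniform on k points pairwise at distance ≥ 2), where τ = k(k+1)m/n - k. -/

import Mathlib

open MeasureTheory ProbabilityTheory
open scoped ENNReal NNReal

/-- The Lévy concentration function `Q_h(μ) = sup_x μ((x, x+h])`. -/
noncomputable def conc (μ : Measure ℝ) (h : ℝ) : ℝ≥0∞ :=
  ⨆ x : ℝ, μ (Set.Ioc x (x + h))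


/-- A probability measure on ℝ, uniform on j points whose pairwise distances are ≥ 2. -/
def IsUniformSep (j : ℕ) (μ : Measure ℝ) : Prop :=
  ∃ s : Finset ℝ, s.card = j ∧ (∀ a ∈ s, ∀ b ∈ s, a ≠ b → 2 ≤ |a - b|) ∧
    μ = ((j : ℝ≥0∞))⁻¹ • ∑ y ∈ s, Measure.dirac y

namespace ReprAux

lemma repr_finset (μ : Measure ℝ) (s : Finset ℝ) (hs : μ (↑s)ᶜ = 0) :
    μ = ∑ y ∈ s, μ {y} • Measure.dirac y := by
  classical
  ext A hA
  rw [Measure.finset_sum_apply]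
  have h1 : ∀ y ∈ s, (μ {y} • Measure.dirac y) A = if y ∈ A then μ {y} else 0 := by
    intro y _
    rw [Measure.smul_apply, Measure.dirac_apply' _ hA]
    by_cases h : y ∈ A <;> simp [h]
  rw [Finset.sum_congr rfl h1, ← Finset.sum_filter]
  have h2 : A ∩ ↑s = ⋃ y ∈ s.filter (· ∈ A), ({y} : Set ℝ) := by
    ext z
    simp only [Set.mem_inter_iff, Set.mem_iUnion, Set.mem_singleton_iff, Finset.mem_filter,
      Finset.mem_coe]
    constructor
    · rintro ⟨hz1, hz2⟩; exact ⟨z, ⟨hz2, hz1⟩, rfl⟩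
    · rintro ⟨y, ⟨hy1, hy2⟩, rfl⟩; exact ⟨hy2, hy1⟩
  have h3 : μ A = μ (A ∩ ↑s) := by
    have := measure_inter_add_diff (μ := μ) A (s.finite_toSet.measurableSet)
    have h4 : μ (A \ ↑s) = 0 := measure_mono_null (fun z hz => hz.2) hs
    rw [h4, add_zero] at this
    exact this.symm
  rw [h3, h2, measure_biUnion_finset]
  · intro a _ b _ hab
    simp [Set.disjoint_singleton, hab]
  · intro b _; exact measurableSet_singleton b

lemma sum_cnt {β : Type*} [AddCommMonoid β] (f : ℕ → β) (M k R : ℕ) (hM : 0 < M) (hR : R < M) :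
    ∑ i ∈ Finset.range (k*M + R), f i
      = ∑ r ∈ Finset.range M, ∑ t ∈ Finset.range (if r < R then k+1 else k), f (r + t*M) := by
  classical
  rw [Finset.sum_sigma']
  refine (Finset.sum_nbij' (fun p => p.1 + p.2 * M) (fun i => ⟨i % M, i / M⟩) ?_ ?_ ?_ ?_ ?_).symm
  · rintro ⟨r, t⟩ hp
    simp only [Finset.mem_sigma, Finset.mem_range] at hp ⊢
    obtain ⟨hr, ht⟩ := hp
    split_ifs at ht with h
    · have : t * M ≤ k * M := Nat.mul_le_mul_right M (by omega)
      omega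
    · have : t * M ≤ (k-1) * M := Nat.mul_le_mul_right M (by omega)
      have h2 : M + (k-1)*M = k*M := by
        have hk1 : k - 1 + 1 = k := by omega
        calc M + (k-1)*M = (k-1+1) * M := by ring
        _ = k * M := by rw [hk1]
      omega
  · intro i hi
    simp only [Finset.mem_range] at hi
    simp only [Finset.mem_sigma, Finset.mem_range]
    refine ⟨Nat.mod_lt _ hM, ?_⟩
    have hd : M * (i / M) + i % M = i := Nat.div_add_mod i M
    split_ifs with h
    · have : i < M * (k+1) := by nlinarith [Nat.div_add_mod i M]
      have := Nat.div_lt_of_lt_mul this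
      omega
    · by_contra hc
      push_neg at hc
      have hmk : M * k = k * M := Nat.mul_comm _ _
      have : M * k ≤ M * (i / M) := Nat.mul_le_mul_left M hc
      omega
  · rintro ⟨r, t⟩ hp
    simp only [Finset.mem_sigma, Finset.mem_range] at hp
    have h1 : (r + t * M) % M = r := by
      rw [Nat.add_mul_mod_self_right, Nat.mod_eq_of_lt hp.1]
    have h2 : (r + t * M) / M = t := by
      rw [Nat.add_mul_div_right _ _ hM, Nat.div_eq_of_lt hp.1, Nat.zero_add]
    simp [h1, h2]
  · intro i hi
    simp only
    exact Nat.mod_add_div' i M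
  · intro p hp; rfl

lemma sum_cnt' {β : Type*} [AddCommMonoid β] (f : ℕ → β) (M k R : ℕ) (hM : 0 < M) (hR : R < M) :
    ∑ i ∈ Finset.range (k*M + R), f i
      = (∑ r ∈ Finset.range R, ∑ t ∈ Finset.range (k+1), f (r + t*M))
        + ∑ r ∈ Finset.range (M - R), ∑ t ∈ Finset.range k, f ((R + r) + t*M) := by
  rw [sum_cnt f M k R hM hR]
  rw [Finset.range_eq_Ico, ← Finset.sum_Ico_consecutive _ (Nat.zero_le R) (le_of_lt hR)]
  congr 1
  · rw [← Finset.range_eq_Ico]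
    apply Finset.sum_congr rfl
    intro r hr
    rw [if_pos (Finset.mem_range.mp hr)]
  · rw [Finset.sum_Ico_eq_sum_range]
    apply Finset.sum_congr rfl
    intro r _
    rw [if_neg (by omega)]

/-- sum over a list as sum over positions -/
lemma list_sum_eq {β : Type*} [AddCommMonoid β] (l : List ℝ) (f : ℝ → β) :
    (l.map f).sum = ∑ i ∈ Finset.range l.length, f (l.getD i 0) := by
  induction l with
  | nil => simp
  | cons a l ih =>
      rw [List.map_cons, List.sum_cons, List.length_cons, Finset.sum_range_succ']
      simp only [List.getD_cons_succ, List.getD_cons_zero]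
      rw [← ih, add_comm]


lemma sorted_repr (μ : Measure ℝ) [IsProbabilityMeasure μ]
    (s : Finset ℝ) (hs : μ (↑s)ᶜ = 0)
    (hq0 : ∀ y : ℝ, ∃ q : ℚ, μ {y} = ENNReal.ofReal (q : ℝ)) (n : ℕ) (hn : 0 < n) :
    ∃ (D : ℕ) (x : ℕ → ℝ), 0 < D ∧
      (∀ i j : ℕ, i ≤ j → j < n * D → x i ≤ x j) ∧
      μ = (((n * D : ℕ) : ℝ≥0∞))⁻¹ • ∑ i ∈ Finset.range (n * D), Measure.dirac (x i) := by
  classical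
  choose q0 hq0' using hq0
  set q : ℝ → ℚ := fun y => max (q0 y) 0 with hqdef
  have hq : ∀ y, μ {y} = ENNReal.ofReal ((q y : ℝ)) := by
    intro y
    rcases le_total 0 (q0 y) with h | h
    · have : q y = q0 y := max_eq_left h
      rw [this]; exact hq0' y
    · have h1 : q y = 0 := max_eq_right h
      have h2 : μ {y} = 0 := by
        rw [hq0' y]
        exact ENNReal.ofReal_eq_zero.mpr (by exact_mod_cast h)
      rw [h1, h2]; simp
  have hqnn : ∀ y, 0 ≤ q y := fun y => le_max_right _ _
  set D : ℕ := ∏ y ∈ s, (q y).den with hDdef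
  have hD : 0 < D := Finset.prod_pos (fun y _ => (q y).pos)
  set c : ℝ → ℕ := fun y => (q y).num.toNat * (D / (q y).den) with hcdef
  have hc : ∀ y ∈ s, (c y : ℚ) = q y * D := by
    intro y hy
    have hdvd : (q y).den ∣ D := Finset.dvd_prod_of_mem _ hy
    have hden : ((q y).den : ℚ) ≠ 0 := by exact_mod_cast (q y).den_nz
    have h1 : ((D / (q y).den : ℕ) : ℚ) = (D : ℚ) / ((q y).den : ℚ) :=
      Nat.cast_div hdvd hden
    have h2 : (((q y).num.toNat : ℤ)) = ((q y).num) :=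
      Int.toNat_of_nonneg (Rat.num_nonneg.mpr (hqnn y))
    have hnum : q y * ((q y).den : ℚ) = ((q y).num : ℚ) := Rat.mul_den_eq_num _
    have h3 : (c y : ℚ) = (((q y).num : ℚ)) * ((D : ℚ) / ((q y).den : ℚ)) := by
      simp only [hcdef]
      push_cast [h1]
      rw [show (((q y).num.toNat : ℚ)) = (((q y).num : ℚ)) from by exact_mod_cast h2]
    rw [h3]
    field_simp
    linear_combination (-1 : ℚ) * hnum
  have hsum1 : ∑ y ∈ s, μ {y} = 1 := by
    have h1 : μ ↑s = 1 := by
      have := measure_add_measure_compl (μ := μ) (s.finite_toSet.measurableSet)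
      rw [hs, add_zero, measure_univ] at this
      exact this
    have h2 : μ ↑s = ∑ y ∈ s, μ {y} := by
      have hcoe : (↑s : Set ℝ) = ⋃ y ∈ s, ({y} : Set ℝ) := by
        ext z; simp
      rw [hcoe, measure_biUnion_finset]
      · intro a _ b _ hab; simp [Set.disjoint_singleton, hab]
      · intro b _; exact measurableSet_singleton b
    rw [← h2, h1]
  have hsumq : ∑ y ∈ s, (q y : ℝ) = 1 := by
    have h1 : ENNReal.ofReal (∑ y ∈ s, (q y : ℝ)) = 1 := by
      rw [ENNReal.ofReal_sum_of_nonneg (fun y _ => by exact_mod_cast hqnn y)]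
      rw [← hsum1]
      exact Finset.sum_congr rfl (fun y _ => (hq y).symm)
    exact ENNReal.ofReal_eq_one.mp h1
  have hsumc : ∑ y ∈ s, c y = D := by
    have h1 : ((∑ y ∈ s, c y : ℕ) : ℚ) = ((D : ℕ) : ℚ) := by
      push_cast
      rw [Finset.sum_congr rfl hc, ← Finset.sum_mul]
      have h2 : (∑ y ∈ s, (q y : ℚ)) = 1 := by exact_mod_cast hsumq
      rw [h2, one_mul]
    exact_mod_cast h1
  set T : Multiset ℝ := ∑ y ∈ s, Multiset.replicate (n * c y) y with hTdef
  set l : List ℝ := T.sort (· ≤ ·) with hldef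
  have hlT : (l : Multiset ℝ) = T := Multiset.sort_eq _ _
  let cardHom : Multiset ℝ →+ ℕ :=
    ⟨⟨Multiset.card, Multiset.card_zero⟩, Multiset.card_add⟩
  have hlen : l.length = n * D := by
    have h1 : l.length = Multiset.card T := by rw [← hlT]; rfl
    have h2 : Multiset.card T = ∑ y ∈ s, Multiset.card (Multiset.replicate (n * c y) y) := by
      rw [hTdef]
      exact map_sum cardHom _ s
    rw [h1, h2]
    simp only [Multiset.card_replicate]
    rw [← Finset.mul_sum, hsumc]
  have hsort : l.Pairwise (· ≤ ·) := Multiset.pairwise_sort _ _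
  refine ⟨D, fun i => l.getD i 0, hD, ?_, ?_⟩
  · intro i j hij hj
    rcases eq_or_lt_of_le hij with rfl | hlt
    · exact le_refl _
    · have hj' : j < l.length := by rw [hlen]; exact hj
      have hi' : i < l.length := lt_trans hlt hj'
      show l.getD i 0 ≤ l.getD j 0
      rw [List.getD_eq_getElem _ _ hi', List.getD_eq_getElem _ _ hj']
      exact List.Pairwise.rel_get_of_lt hsort (a := ⟨i, hi'⟩) (b := ⟨j, hj'⟩)
        (by exact_mod_cast hlt)
  · have hmap : ∑ i ∈ Finset.range (n * D), Measure.dirac (l.getD i 0)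
        = ∑ y ∈ s, (n * c y) • Measure.dirac y := by
      rw [← hlen, ← list_sum_eq l Measure.dirac]
      have h5 : (l.map Measure.dirac).sum = ((T.map Measure.dirac)).sum := by
        rw [← hlT]; rfl
      rw [h5, hTdef]
      have h7 := map_sum ((Multiset.sumAddMonoidHom).comp
        (Multiset.mapAddMonoidHom Measure.dirac))
        (fun y => Multiset.replicate (n * c y) y) s
      simp only [AddMonoidHom.coe_comp, Function.comp_apply,
        Multiset.coe_mapAddMonoidHom, Multiset.coe_sumAddMonoidHom] at h7
      rw [h7]
      apply Finset.sum_congr rfl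
      intro y _
      rw [Multiset.map_replicate, Multiset.sum_replicate]
    have hcoef : ∀ y ∈ s, μ {y}
        = (((n * D : ℕ) : ℝ≥0∞))⁻¹ * (((n * c y : ℕ) : ℝ≥0∞)) := by
      intro y hy
      have hND : (0 : ℝ) < ((n * D : ℕ) : ℝ) := by
        have : 0 < n * D := Nat.mul_pos hn hD
        exact_mod_cast this
      have hcr : ((q y : ℝ)) = ((c y : ℝ)) / ((D : ℕ) : ℝ) := by
        have := hc y hy
        have h8 : ((c y : ℝ)) = (q y : ℝ) * ((D : ℕ) : ℝ) := by exact_mod_cast this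
        rw [h8]
        field_simp
      rw [hq y, hcr]
      rw [show (((n * D : ℕ) : ℝ≥0∞))⁻¹ = ENNReal.ofReal ((((n * D : ℕ) : ℝ))⁻¹) from by
        rw [ENNReal.ofReal_inv_of_pos hND, ENNReal.ofReal_natCast],
        show (((n * c y : ℕ) : ℝ≥0∞)) = ENNReal.ofReal (((n * c y : ℕ) : ℝ)) from
          (ENNReal.ofReal_natCast _).symm,
        ← ENNReal.ofReal_mul (by positivity)]
      congr 1
      push_cast
      rw [mul_comm ((n:ℝ)) ((c y : ℝ))]
      field_simp
    calc μ = ∑ y ∈ s, μ {y} • Measure.dirac y := repr_finset μ s hs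
      _ = (((n * D : ℕ) : ℝ≥0∞))⁻¹ • ∑ y ∈ s, (n * c y) • Measure.dirac y := by
          rw [Finset.smul_sum]
          apply Finset.sum_congr rfl
          intro y hy
          rw [← Nat.cast_smul_eq_nsmul ℝ≥0∞ (n * c y), smul_smul, ← hcoef y hy]
      _ = (((n * D : ℕ) : ℝ≥0∞))⁻¹ • ∑ i ∈ Finset.range (n * D), Measure.dirac (l.getD i 0) := by
          rw [hmap]
      _ = _ := rfl


lemma window (μ : Measure ℝ) (x : ℕ → ℝ) (N M : ℕ) (hN : 0 < N)
    (hx : μ = ((N : ℝ≥0∞))⁻¹ • ∑ i ∈ Finset.range N, Measure.dirac (x i))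
    (mono : ∀ i j : ℕ, i ≤ j → j < N → x i ≤ x j)
    (hQ : ∀ a : ℝ, μ (Set.Ioc a (a + 2)) ≤ (M : ℝ≥0∞) / N) :
    ∀ i : ℕ, i + M < N → x i + 2 ≤ x (i + M) := by
  intro i hiM
  by_contra hcon
  push_neg at hcon
  set ε : ℝ := (x i + 2 - x (i + M)) / 2 with hε
  have hεpos : 0 < ε := by simp only [hε]; linarith
  set a : ℝ := x i - ε with ha
  have hmem : ∀ j ∈ Finset.Icc i (i + M), x j ∈ Set.Ioc a (a + 2) := by
    intro j hj
    rw [Finset.mem_Icc] at hj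
    have h1 : x i ≤ x j := mono i j hj.1 (by omega)
    have h2 : x j ≤ x (i + M) := mono j (i + M) hj.2 hiM
    constructor
    · simp only [ha]; linarith
    · simp only [ha]; simp only [hε] at *; linarith
  have hcount : ((M : ℝ≥0∞) + 1) / N ≤ μ (Set.Ioc a (a + 2)) := by
    rw [hx, Measure.smul_apply, Measure.finset_sum_apply]
    have h3 : ∀ j ∈ Finset.Icc i (i + M), (1 : ℝ≥0∞) ≤ Measure.dirac (x j) (Set.Ioc a (a + 2)) := by
      intro j hj
      rw [Measure.dirac_apply' _ measurableSet_Ioc]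
      rw [Set.indicator_of_mem (hmem j hj)]
      exact le_refl _
    have h4 : ((M : ℝ≥0∞) + 1) ≤ ∑ j ∈ Finset.range N, Measure.dirac (x j) (Set.Ioc a (a + 2)) := by
      calc ((M : ℝ≥0∞) + 1) = ∑ _j ∈ Finset.Icc i (i + M), (1 : ℝ≥0∞) := by
            rw [Finset.sum_const, Nat.card_Icc]
            have hcard : i + M + 1 - i = M + 1 := by omega
            rw [hcard, nsmul_eq_mul, mul_one]
            push_cast; ring
        _ ≤ ∑ j ∈ Finset.Icc i (i + M), Measure.dirac (x j) (Set.Ioc a (a + 2)) :=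
            Finset.sum_le_sum h3
        _ ≤ ∑ j ∈ Finset.range N, Measure.dirac (x j) (Set.Ioc a (a + 2)) := by
            apply Finset.sum_le_sum_of_subset
            intro j hj
            rw [Finset.mem_Icc] at hj
            rw [Finset.mem_range]
            omega
    rw [smul_eq_mul, ENNReal.div_eq_inv_mul]
    exact mul_le_mul_right h4 _
  have hfin : ((M : ℝ≥0∞) + 1) / N ≤ (M : ℝ≥0∞) / N := le_trans hcount (hQ a)
  have hN0 : ((N : ℝ≥0∞)) ≠ 0 := Nat.cast_ne_zero.mpr (by omega)
  have hNtop : ((N : ℝ≥0∞)) ≠ ⊤ := ENNReal.natCast_ne_top N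
  have : ((M : ℝ≥0∞) + 1) ≤ (M : ℝ≥0∞) := by
    calc ((M : ℝ≥0∞) + 1) = ((M : ℝ≥0∞) + 1) / N * N := by
          rw [ENNReal.div_mul_cancel hN0 hNtop]
      _ ≤ (M : ℝ≥0∞) / N * N := mul_le_mul_left hfin _
      _ = (M : ℝ≥0∞) := by rw [ENNReal.div_mul_cancel hN0 hNtop]
  have hM1 : (M : ℝ≥0∞) + 1 = ((M + 1 : ℕ) : ℝ≥0∞) := by push_cast; ring
  rw [hM1] at this
  have := (Nat.cast_le (α := ℝ≥0∞)).mp this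
  omega

lemma group (x : ℕ → ℝ) (N M : ℕ) (hM : 0 < M)
    (mono : ∀ i j : ℕ, i ≤ j → j < N → x i ≤ x j)
    (sep : ∀ i : ℕ, i + M < N → x i + 2 ≤ x (i + M))
    (r j : ℕ) (hj : 0 < j) (hval : r + (j - 1) * M < N) :
    ∃ F : Finset ℝ, F.card = j ∧ (∀ a ∈ F, ∀ b ∈ F, a ≠ b → 2 ≤ |a - b|) ∧
      ∑ y ∈ F, Measure.dirac y = ∑ t ∈ Finset.range j, Measure.dirac (x (r + t * M)) := by
  classical
  have key : ∀ t t' : ℕ, t < t' → t' < j → x (r + t * M) + 2 ≤ x (r + t' * M) := by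
    intro t t' htt' ht'
    have h1 : (t + 1) * M ≤ t' * M := Nat.mul_le_mul_right M (by omega)
    have h2 : t' * M ≤ (j - 1) * M := Nat.mul_le_mul_right M (by omega)
    have h3 : r + (t + 1) * M < N := by omega
    have h4 : r + t * M + M = r + (t + 1) * M := by ring
    have h5 := sep (r + t * M) (by omega)
    rw [h4] at h5
    have h6 : x (r + (t + 1) * M) ≤ x (r + t' * M) := mono _ _ (by omega) (by omega)
    linarith
  have hinj : Set.InjOn (fun t => x (r + t * M)) ↑(Finset.range j) := by
    intro t ht t' ht' heq
    simp only [Finset.coe_range, Set.mem_Iio] at ht ht'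
    by_contra hne
    rcases Nat.lt_or_ge t t' with h | h
    · have := key t t' h ht'; simp only at heq; linarith
    · have h' : t' < t := by omega
      have := key t' t h' ht; simp only at heq; linarith
  refine ⟨(Finset.range j).image (fun t => x (r + t * M)), ?_, ?_, ?_⟩
  · rw [Finset.card_image_of_injOn hinj, Finset.card_range]
  · intro a ha b hb hab
    simp only [Finset.mem_image, Finset.mem_range] at ha hb
    obtain ⟨t, ht, rfl⟩ := ha
    obtain ⟨t', ht', rfl⟩ := hb
    rcases Nat.lt_or_ge t t' with h | h
    · have := key t t' h ht'
      rw [abs_sub_comm, abs_of_nonneg (by linarith)]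
      linarith
    · have h' : t' < t := by
        rcases Nat.eq_or_lt_of_le h with rfl | h2
        · exact absurd rfl hab
        · omega
      have := key t' t h' ht
      rw [abs_of_nonneg (by linarith)]
      linarith
  · rw [Finset.sum_image (fun a ha b hb => hinj ha hb)]


lemma nat_inv_ofReal (X : ℕ) (hX : 0 < X) :
    ((X : ℝ≥0∞))⁻¹ = ENNReal.ofReal (((X : ℝ))⁻¹) := by
  rw [ENNReal.ofReal_inv_of_pos (by exact_mod_cast hX), ENNReal.ofReal_natCast]

lemma scalarB (m n k D : ℕ) (hk : 1 ≤ k) (hD : 0 < D) (hn : 0 < n) (hm : 0 < m)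
    (hkm : k * m ≤ n) (hn1 : n < (k + 1) * m) :
    ENNReal.ofReal ((k : ℝ) * (k + 1) * m / n - k)
        * ((((k + 1) * m - n) * D : ℕ) : ℝ≥0∞)⁻¹ * ((k : ℝ≥0∞))⁻¹
      = (((n * D : ℕ) : ℝ≥0∞))⁻¹ := by
  have hnR : (0 : ℝ) < n := by exact_mod_cast hn
  have hkR : (0 : ℝ) < k := by exact_mod_cast hk
  have hDR : (0 : ℝ) < D := by exact_mod_cast hD
  have hLn : 0 < ((k + 1) * m - n) * D := by
    apply Nat.mul_pos _ hD
    omega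
  have hcast : ((((k + 1) * m - n) * D : ℕ) : ℝ) = (((k : ℝ) + 1) * m - n) * D := by
    push_cast [Nat.cast_sub (le_of_lt hn1)]
    ring
  have hLR : (0 : ℝ) < ((((k + 1) * m - n) * D : ℕ) : ℝ) := by exact_mod_cast hLn
  have hτ : 0 ≤ (k : ℝ) * (k + 1) * m / n - k := by
    rw [sub_nonneg, le_div_iff₀ hnR]
    have : (n : ℝ) ≤ (k + 1) * m := by exact_mod_cast le_of_lt hn1
    nlinarith
  rw [nat_inv_ofReal _ hLn, nat_inv_ofReal _ hk, nat_inv_ofReal _ (Nat.mul_pos hn hD),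
    ← ENNReal.ofReal_mul hτ, ← ENNReal.ofReal_mul (by positivity)]
  congr 1
  rw [hcast]
  have h2 : (((k : ℝ) + 1) * m - n) > 0 := by
    have : (n : ℝ) < (k + 1) * m := by exact_mod_cast hn1
    linarith
  push_cast
  field_simp

lemma scalarA (m n k D : ℕ) (hk : 1 ≤ k) (hD : 0 < D) (hn : 0 < n) (hm : 0 < m)
    (hkm : k * m < n) (hn1 : n < (k + 1) * m) :
    ENNReal.ofReal (1 - ((k : ℝ) * (k + 1) * m / n - k))
        * (((n - k * m) * D : ℕ) : ℝ≥0∞)⁻¹ * (((k + 1 : ℕ) : ℝ≥0∞))⁻¹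
      = (((n * D : ℕ) : ℝ≥0∞))⁻¹ := by
  have hnR : (0 : ℝ) < n := by exact_mod_cast hn
  have hkR : (0 : ℝ) < k := by exact_mod_cast hk
  have hDR : (0 : ℝ) < D := by exact_mod_cast hD
  have hRn : 0 < (n - k * m) * D := by
    apply Nat.mul_pos _ hD
    omega
  have hcast : (((n - k * m) * D : ℕ) : ℝ) = ((n : ℝ) - k * m) * D := by
    push_cast [Nat.cast_sub (le_of_lt hkm)]
    ring
  have hτ : 0 ≤ 1 - ((k : ℝ) * (k + 1) * m / n - k) := by
    rw [sub_nonneg, sub_le_iff_le_add, div_le_iff₀ hnR]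
    have : (k : ℝ) * m < n := by exact_mod_cast hkm
    nlinarith
  rw [nat_inv_ofReal _ hRn, nat_inv_ofReal _ (by omega), nat_inv_ofReal _ (Nat.mul_pos hn hD),
    ← ENNReal.ofReal_mul hτ, ← ENNReal.ofReal_mul (by positivity)]
  congr 1
  rw [hcast]
  have h2 : (0:ℝ) < (n : ℝ) - k * m := by
    have : (k : ℝ) * m < n := by exact_mod_cast hkm
    linarith
  push_cast
  field_simp
  ring

lemma dummy_unif (k : ℕ) :
    IsUniformSep (k + 1) ((((k + 1 : ℕ) : ℝ≥0∞))⁻¹ •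
      ∑ y ∈ (Finset.range (k + 1)).image (fun t : ℕ => 2 * (t : ℝ)), Measure.dirac y) := by
  have hinj : Function.Injective (fun t : ℕ => 2 * (t : ℝ)) := by
    intro a b hab
    simp only at hab
    exact_mod_cast (by linarith : (a : ℝ) = b)
  refine ⟨(Finset.range (k + 1)).image (fun t : ℕ => 2 * (t : ℝ)), ?_, ?_, rfl⟩
  · rw [Finset.card_image_of_injective _ hinj, Finset.card_range]
  · intro a ha b hb hab
    simp only [Finset.mem_image, Finset.mem_range] at ha hb
    obtain ⟨t, _, rfl⟩ := ha
    obtain ⟨t', _, rfl⟩ := hb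
    have ht : t ≠ t' := by rintro rfl; exact hab rfl
    have h1 : (1 : ℝ) ≤ |(t : ℝ) - t'| := by
      rcases Nat.lt_or_ge t t' with h | h
      · have : (t : ℝ) + 1 ≤ t' := by exact_mod_cast h
        rw [abs_sub_comm, abs_of_nonneg (by linarith)]
        linarith
      · have h' : t' < t := by omega
        have : (t' : ℝ) + 1 ≤ t := by exact_mod_cast h'
        rw [abs_of_nonneg (by linarith)]
        linarith
    have h2 : |2 * (t : ℝ) - 2 * t'| = 2 * |(t : ℝ) - t'| := by
      rw [show 2 * (t : ℝ) - 2 * t' = 2 * ((t : ℝ) - t') by ring, abs_mul,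
        abs_of_nonneg (by norm_num : (0:ℝ) ≤ 2)]
    rw [h2]
    linarith

end ReprAux

open ReprAux in
/-- Representation lemma: a simple distribution μ with Q_2(μ) = m/n ∈ (1/(k+1), 1/k]
is a mixture (1-τ)·(average of K uniform-on-(k+1)-separated-points measures)
+ τ·(average of L uniform-on-k-separated-points measures), τ = k(k+1)m/n - k. -/
theorem representation_lemma (μ : Measure ℝ) [IsProbabilityMeasure μ]
    (hsimple : ∃ s : Finset ℝ, μ (↑s)ᶜ = 0 ∧ ∀ y : ℝ, ∃ q : ℚ, μ {y} = ENNReal.ofReal (q : ℝ))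
    (m n k : ℕ) (hk : 1 ≤ k)
    (hQ : conc μ 2 = ENNReal.ofReal ((m : ℝ) / n))
    (hrange : (m : ℝ) / n ∈ Set.Ioc (1 / ((k : ℝ) + 1)) (1 / (k : ℝ))) :
    ∃ (K L : ℕ), 0 < K ∧ 0 < L ∧
    ∃ (μ₁ : Fin K → Measure ℝ) (μ₂ : Fin L → Measure ℝ),
      (∀ l, IsUniformSep (k + 1) (μ₁ l)) ∧ (∀ l, IsUniformSep k (μ₂ l)) ∧
      μ = ENNReal.ofReal (1 - ((k : ℝ) * (k + 1) * m / n - k)) •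
            ((K : ℝ≥0∞)⁻¹ • ∑ l, μ₁ l)
        + ENNReal.ofReal ((k : ℝ) * (k + 1) * m / n - k) •
            ((L : ℝ≥0∞)⁻¹ • ∑ l, μ₂ l) := by
  classical
  obtain ⟨s, hs, hqr⟩ := hsimple
  obtain ⟨hlow, hhigh⟩ := hrange
  have hkR : (0 : ℝ) < k := by exact_mod_cast hk
  have hn : 0 < n := by
    rcases Nat.eq_zero_or_pos n with rfl | h
    · exfalso
      have h0 : (0 : ℝ) < 1 / ((k : ℝ) + 1) := by positivity
      simp only [Nat.cast_zero, div_zero] at hlow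
      linarith
    · exact h
  have hnR : (0 : ℝ) < n := by exact_mod_cast hn
  have hmn0 : (0 : ℝ) < (m : ℝ) / n := lt_trans (by positivity) hlow
  have hm : 0 < m := by
    rcases Nat.eq_zero_or_pos m with rfl | h
    · simp at hmn0
    · exact h
  have hmR : (0 : ℝ) < m := by exact_mod_cast hm
  have hkm : k * m ≤ n := by
    have h1 : (m : ℝ) * k ≤ 1 * n := (div_le_div_iff₀ hnR hkR).mp hhigh
    have h2 : ((k * m : ℕ) : ℝ) ≤ ((n : ℕ) : ℝ) := by push_cast; linarith
    exact_mod_cast h2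
  have hn1 : n < (k + 1) * m := by
    have h1 : 1 * (n : ℝ) < m * ((k : ℝ) + 1) := (div_lt_div_iff₀ (by positivity) hnR).mp hlow
    have h2 : ((n : ℕ) : ℝ) < (((k + 1) * m : ℕ) : ℝ) := by push_cast; linarith
    exact_mod_cast h2
  have hexp : (k + 1) * m = k * m + m := by ring
  obtain ⟨D, x, hD, mono, hx⟩ := sorted_repr μ s hs hqr n hn
  obtain ⟨N, hNdef⟩ : ∃ N : ℕ, N = n * D := ⟨_, rfl⟩
  obtain ⟨M, hMdef⟩ : ∃ M : ℕ, M = m * D := ⟨_, rfl⟩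
  obtain ⟨R, hRdef⟩ : ∃ R : ℕ, R = (n - k * m) * D := ⟨_, rfl⟩
  obtain ⟨Lv, hLdef⟩ : ∃ Lv : ℕ, Lv = ((k + 1) * m - n) * D := ⟨_, rfl⟩
  rw [← hNdef] at hx mono
  have hMpos : 0 < M := hMdef ▸ Nat.mul_pos hm hD
  have hNpos : 0 < N := hNdef ▸ Nat.mul_pos hn hD
  have hLpos : 0 < Lv := hLdef ▸ Nat.mul_pos (by omega) hD
  have hNM : N = k * M + R := by
    have h1 : k * m + (n - k * m) = n := by omega
    rw [hNdef, hMdef, hRdef]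
    calc n * D = (k * m + (n - k * m)) * D := by rw [h1]
      _ = k * (m * D) + (n - k * m) * D := by ring
  have hRM : R < M := by
    rw [hRdef, hMdef]
    have h1 : n - k * m < m := by omega
    exact (Nat.mul_lt_mul_right hD).mpr h1
  have hML : M = R + Lv := by
    have h1 : (n - k * m) + ((k + 1) * m - n) = m := by omega
    rw [hMdef, hRdef, hLdef]
    calc m * D = ((n - k * m) + ((k + 1) * m - n)) * D := by rw [h1]
      _ = (n - k * m) * D + ((k + 1) * m - n) * D := by ring
  -- concentration bound
  have hQb : ∀ a : ℝ, μ (Set.Ioc a (a + 2)) ≤ (M : ℝ≥0∞) / N := by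
    intro a
    have h1 : μ (Set.Ioc a (a + 2)) ≤ conc μ 2 := le_iSup (fun y => μ (Set.Ioc y (y + 2))) a
    rw [hQ] at h1
    have hD0 : ((D : ℝ≥0∞)) ≠ 0 := Nat.cast_ne_zero.mpr (by omega)
    have hDt : ((D : ℝ≥0∞)) ≠ ⊤ := ENNReal.natCast_ne_top D
    have h2 : ENNReal.ofReal ((m : ℝ) / n) = (M : ℝ≥0∞) / N := by
      rw [ENNReal.ofReal_div_of_pos hnR, ENNReal.ofReal_natCast, ENNReal.ofReal_natCast,
        hMdef, hNdef, Nat.cast_mul, Nat.cast_mul, ENNReal.mul_div_mul_right _ _ hD0 hDt]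
    rwa [h2] at h1
  have hsep : ∀ i : ℕ, i + M < N → x i + 2 ≤ x (i + M) := window μ x N M hNpos hx mono hQb
  have hkM : (k - 1) * M + M = k * M := by
    have h1 : k - 1 + 1 = k := by omega
    calc (k - 1) * M + M = ((k - 1) + 1) * M := by ring
      _ = k * M := by rw [h1]
  -- groups for the second family
  have grp2 : ∀ l : ℕ, ∃ F : Finset ℝ, l < Lv →
      (F.card = k ∧ (∀ a ∈ F, ∀ b ∈ F, a ≠ b → 2 ≤ |a - b|) ∧
        ∑ y ∈ F, Measure.dirac y = ∑ t ∈ Finset.range k, Measure.dirac (x ((R + l) + t * M))) := by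
    intro l
    by_cases hl : l < Lv
    · have hval : (R + l) + (k - 1) * M < N := by
        have h3 : l < M := by omega
        have h4 : l + (k - 1) * M < k * M := by omega
        omega
      obtain ⟨F, h1, h2, h3⟩ := group x N M hMpos mono hsep (R + l) k (by omega) hval
      exact ⟨F, fun _ => ⟨h1, h2, h3⟩⟩
    · exact ⟨∅, fun h => absurd h hl⟩
  choose F2 hF2 using grp2
  have hunif2 : ∀ l : Fin Lv,
      IsUniformSep k (((k : ℝ≥0∞))⁻¹ • ∑ y ∈ F2 (l : ℕ), Measure.dirac y) :=
    fun l => ⟨F2 (l : ℕ), (hF2 l l.isLt).1, (hF2 l l.isLt).2.1, rfl⟩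
  -- the split of the full sum
  have hsplit : ∑ i ∈ Finset.range N, Measure.dirac (x i)
      = (∑ r ∈ Finset.range R, ∑ t ∈ Finset.range (k + 1), Measure.dirac (x (r + t * M)))
        + ∑ r ∈ Finset.range Lv, ∑ t ∈ Finset.range k, Measure.dirac (x ((R + r) + t * M)) := by
    rw [hNM, sum_cnt' (fun i => Measure.dirac (x i)) M k R hMpos hRM,
      show M - R = Lv from by omega]
  have hxsplit : μ = ((N : ℝ≥0∞))⁻¹ •
        (∑ r ∈ Finset.range R, ∑ t ∈ Finset.range (k + 1), Measure.dirac (x (r + t * M)))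
      + ((N : ℝ≥0∞))⁻¹ •
        (∑ r ∈ Finset.range Lv, ∑ t ∈ Finset.range k, Measure.dirac (x ((R + r) + t * M))) := by
    rw [hx, hsplit, smul_add]
  have hsum2 : ∑ l : Fin Lv, ((k : ℝ≥0∞))⁻¹ • ∑ y ∈ F2 (l : ℕ), Measure.dirac y
      = ((k : ℝ≥0∞))⁻¹ •
        ∑ r ∈ Finset.range Lv, ∑ t ∈ Finset.range k, Measure.dirac (x ((R + r) + t * M)) := by
    rw [Fin.sum_univ_eq_sum_range
      (fun l => ((k : ℝ≥0∞))⁻¹ • ∑ y ∈ F2 l, Measure.dirac y) Lv, Finset.smul_sum]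
    exact Finset.sum_congr rfl (fun r hr => by rw [(hF2 r (Finset.mem_range.mp hr)).2.2])
  have hscalar2 : ENNReal.ofReal ((k : ℝ) * (k + 1) * m / n - k)
      * ((Lv : ℝ≥0∞))⁻¹ * ((k : ℝ≥0∞))⁻¹ = ((N : ℝ≥0∞))⁻¹ := by
    rw [hLdef, hNdef]
    exact scalarB m n k D hk hD hn hm hkm hn1
  have hterm2 : ENNReal.ofReal ((k : ℝ) * (k + 1) * m / n - k)
      • (((Lv : ℝ≥0∞))⁻¹ • ∑ l : Fin Lv, ((k : ℝ≥0∞))⁻¹ • ∑ y ∈ F2 (l : ℕ), Measure.dirac y)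
      = ((N : ℝ≥0∞))⁻¹ •
        ∑ r ∈ Finset.range Lv, ∑ t ∈ Finset.range k, Measure.dirac (x ((R + r) + t * M)) := by
    rw [hsum2, smul_smul, smul_smul, hscalar2]
  rcases Nat.eq_zero_or_pos R with hR0 | hRpos
  · -- degenerate case: R = 0, τ = 1
    have hnkm : n = k * m := by
      have h1 : n - k * m = 0 ∨ D = 0 := Nat.mul_eq_zero.mp (hRdef ▸ hR0)
      rcases h1 with h1 | h1 <;> omega
    have hτ1 : (k : ℝ) * (k + 1) * m / n - k = 1 := by
      rw [hnkm]
      push_cast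
      have hkm0 : (k : ℝ) * m ≠ 0 := by positivity
      field_simp
      ring
    have hc1 : ENNReal.ofReal (1 - ((k : ℝ) * (k + 1) * m / n - k)) = 0 := by
      rw [hτ1]; simp
    refine ⟨1, Lv, one_pos, hLpos,
      fun _ => (((k + 1 : ℕ) : ℝ≥0∞))⁻¹ •
        ∑ y ∈ (Finset.range (k + 1)).image (fun t : ℕ => 2 * (t : ℝ)), Measure.dirac y,
      fun l => ((k : ℝ≥0∞))⁻¹ • ∑ y ∈ F2 (l : ℕ), Measure.dirac y,
      fun _ => dummy_unif k, hunif2, ?_⟩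
    rw [hc1, zero_smul, zero_add, hterm2, hxsplit, hR0]
    simp
  · -- main case: R > 0
    have hkmlt : k * m < n := by
      by_contra h
      push_neg at h
      have h1 : n - k * m = 0 := by omega
      rw [hRdef, h1, zero_mul] at hRpos
      exact absurd hRpos (lt_irrefl 0)
    have grp1 : ∀ r : ℕ, ∃ F : Finset ℝ, r < R →
        (F.card = k + 1 ∧ (∀ a ∈ F, ∀ b ∈ F, a ≠ b → 2 ≤ |a - b|) ∧
          ∑ y ∈ F, Measure.dirac y
            = ∑ t ∈ Finset.range (k + 1), Measure.dirac (x (r + t * M))) := by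
      intro r
      by_cases hr : r < R
      · obtain ⟨F, h1, h2, h3⟩ := group x N M hMpos mono hsep r (k + 1) (by omega)
          (by simp only [Nat.add_sub_cancel]; omega)
        exact ⟨F, fun _ => ⟨h1, h2, h3⟩⟩
      · exact ⟨∅, fun h => absurd h hr⟩
    choose F1 hF1 using grp1
    have hunif1 : ∀ r : Fin R,
        IsUniformSep (k + 1) ((((k + 1 : ℕ) : ℝ≥0∞))⁻¹ • ∑ y ∈ F1 (r : ℕ), Measure.dirac y) :=
      fun r => ⟨F1 (r : ℕ), (hF1 r r.isLt).1, (hF1 r r.isLt).2.1, rfl⟩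
    have hsum1 : ∑ l : Fin R, (((k + 1 : ℕ) : ℝ≥0∞))⁻¹ • ∑ y ∈ F1 (l : ℕ), Measure.dirac y
        = (((k + 1 : ℕ) : ℝ≥0∞))⁻¹ •
          ∑ r ∈ Finset.range R, ∑ t ∈ Finset.range (k + 1), Measure.dirac (x (r + t * M)) := by
      rw [Fin.sum_univ_eq_sum_range
        (fun r => (((k + 1 : ℕ) : ℝ≥0∞))⁻¹ • ∑ y ∈ F1 r, Measure.dirac y) R, Finset.smul_sum]
      exact Finset.sum_congr rfl (fun r hr => by rw [(hF1 r (Finset.mem_range.mp hr)).2.2])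
    have hscalar1 : ENNReal.ofReal (1 - ((k : ℝ) * (k + 1) * m / n - k))
        * ((R : ℝ≥0∞))⁻¹ * (((k + 1 : ℕ) : ℝ≥0∞))⁻¹ = ((N : ℝ≥0∞))⁻¹ := by
      rw [hRdef, hNdef]
      exact scalarA m n k D hk hD hn hm hkmlt hn1
    have hterm1 : ENNReal.ofReal (1 - ((k : ℝ) * (k + 1) * m / n - k))
        • (((R : ℝ≥0∞))⁻¹ •
            ∑ l : Fin R, (((k + 1 : ℕ) : ℝ≥0∞))⁻¹ • ∑ y ∈ F1 (l : ℕ), Measure.dirac y)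
        = ((N : ℝ≥0∞))⁻¹ •
          ∑ r ∈ Finset.range R, ∑ t ∈ Finset.range (k + 1), Measure.dirac (x (r + t * M)) := by
      rw [hsum1, smul_smul, smul_smul, hscalar1]
    refine ⟨R, Lv, hRpos, hLpos,
      fun r => (((k + 1 : ℕ) : ℝ≥0∞))⁻¹ • ∑ y ∈ F1 (r : ℕ), Measure.dirac y,
      fun l => ((k : ℝ≥0∞))⁻¹ • ∑ y ∈ F2 (l : ℕ), Measure.dirac y,
      hunif1, hunif2, ?_⟩
    rw [hxsplit, ← hterm1, ← hterm2]
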